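/- If every finite power X^k of a topological space X is strongly star-Menger, then X has the strongly star-Scheepers property. -/
import Mathlib


open Set

/-- The dominating number 𝔡: least cardinality of a dominating family in ℕ^ℕ. -/
noncomputable def dominatingNumber : Cardinal :=
  sInf { c | ∃ D : Set (ℕ → ℕ),
    (∀ g : ℕ → ℕ, ∃ f ∈ D, ∀ᶠ n in Filter.atTop, g n ≤ f n) ∧ c = Cardinal.mk D }

/-- `U` is an open cover of the space `X`. -/
def IsOpenCover {X : Type*} [TopologicalSpace X] (U : Set (Set X)) : Prop :=
  (∀ u ∈ U, IsOpen u) ∧ ⋃₀ U = Set.univ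

/-- The star of a set `A` with respect to a family `U`. -/
def starOf {X : Type*} (A : Set X) (U : Set (Set X)) : Set X :=
  ⋃₀ {B | B ∈ U ∧ (A ∩ B).Nonempty}

/-- The star-Scheepers property (ω-cover form). -/
def StarScheepers (X : Type*) [TopologicalSpace X] : Prop :=
  ∀ U : ℕ → Set (Set X), (∀ n, IsOpenCover (U n)) →
    ∃ V : ℕ → Set (Set X), (∀ n, V n ⊆ U n ∧ (V n).Finite) ∧
      ∀ F : Set X, F.Finite → ∃ n, F ⊆ starOf (⋃₀ V n) (U n)

/-- The strongly star-Scheepers property. -/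
def StronglyStarScheepers (X : Type*) [TopologicalSpace X] : Prop :=
  ∀ U : ℕ → Set (Set X), (∀ n, IsOpenCover (U n)) →
    ∃ F : ℕ → Set X, (∀ n, (F n).Finite) ∧
      ∀ G : Set X, G.Finite → ∃ n, G ⊆ starOf (F n) (U n)

/-- The strongly star-Menger property. -/
def StronglyStarMenger (X : Type*) [TopologicalSpace X] : Prop :=
  ∀ U : ℕ → Set (Set X), (∀ n, IsOpenCover (U n)) →
    ∃ F : ℕ → Set X, (∀ n, (F n).Finite) ∧
      ∀ x : X, ∃ n, x ∈ starOf (F n) (U n)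

theorem stmt_5 {X : Type*} [TopologicalSpace X]
    (h : ∀ k : ℕ, StronglyStarMenger (Fin k → X)) :
    StronglyStarScheepers X := by
  classical
  intro U hU
  -- box covers of the finite powers
  set BC : ∀ k : ℕ, ℕ → Set (Set (Fin k → X)) := fun k m =>
    {s | ∃ u : Fin k → Set X, (∀ i, u i ∈ U (Nat.pair k m)) ∧ s = Set.pi Set.univ u} with hBC
  have hBCcover : ∀ k m, IsOpenCover (BC k m) := by
    intro k m
    constructor
    · rintro s ⟨u, hu, rfl⟩
      exact isOpen_set_pi Set.finite_univ (fun i _ => (hU _).1 _ (hu i))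
    · ext f
      simp only [Set.mem_univ, iff_true, Set.mem_sUnion]
      have hex : ∀ i, ∃ u, u ∈ U (Nat.pair k m) ∧ f i ∈ u := by
        intro i
        have : f i ∈ ⋃₀ U (Nat.pair k m) := by rw [(hU _).2]; trivial
        simpa [Set.mem_sUnion] using this
      choose u hu hfu using hex
      exact ⟨Set.pi Set.univ u, ⟨u, hu, rfl⟩, by simp [Set.mem_pi, hfu]⟩
  have hFF : ∀ k, ∃ FF : ℕ → Set (Fin k → X), (∀ m, (FF m).Finite) ∧
      ∀ f, ∃ m, f ∈ starOf (FF m) (BC k m) := fun k => h k (BC k) (hBCcover k)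
  choose FF hFFfin hFFstar using hFF
  refine ⟨fun n => ⋃ i : Fin n.unpair.1, (fun f => f i) '' FF n.unpair.1 n.unpair.2, ?_, ?_⟩
  · intro n
    exact Set.finite_iUnion fun i => (hFFfin _ _).image _
  · intro G hG
    haveI := hG.fintype
    set k := Fintype.card G with hk
    let e : G ≃ Fin k := Fintype.equivFin G
    set g : Fin k → X := fun i => (e.symm i : X) with hg
    obtain ⟨m, hm⟩ := hFFstar k g
    obtain ⟨B, ⟨⟨u, hu, rfl⟩, f, hfFF, hfB⟩, hgB⟩ := hm
    refine ⟨Nat.pair k m, ?_⟩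
    intro x hx
    refine ⟨u (e ⟨x, hx⟩), ⟨hu _, ⟨f (e ⟨x, hx⟩), ?_, ?_⟩⟩, ?_⟩
    · -- f (e ⟨x,hx⟩) is in the projected finite set
      show f (e ⟨x, hx⟩) ∈ ⋃ i : Fin (Nat.pair k m).unpair.1,
        (fun f => f i) '' FF (Nat.pair k m).unpair.1 (Nat.pair k m).unpair.2
      rw [Nat.unpair_pair]
      simp only [Set.mem_iUnion, Set.mem_image]
      exact ⟨e ⟨x, hx⟩, f, hfFF, rfl⟩
    · exact hfB (e ⟨x, hx⟩) (Set.mem_univ _)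
    · have := hgB (e ⟨x, hx⟩) (Set.mem_univ _)
      simpa [hg] using this
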